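/- If φ is a Schwartz function on ℝ such that the family φ_{m,n}(x) = 2^{m/2} φ(2^m x − n), m,n ∈ ℤ, is an orthonormal basis of L²(ℝ), then all moments of φ vanish: ∫_ℝ xⁿ φ(x) dx = 0 for every n ∈ ℕ₀. -/

import Mathlib

open MeasureTheory Filter SchwartzMap
open scoped Real Topology ComplexConjugate SchwartzMap ContDiff

noncomputable section

/-- An affine function `x ↦ a * x + b` has temperate growth. -/
lemma hasTemperateGrowth_of_affine {g : ℝ → ℝ} (a b : ℝ) (hg : ∀ x, g x = a * x + b) :
    Function.HasTemperateGrowth g := by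
  rw [show g = fun x => a * x + b from funext hg]
  apply Function.HasTemperateGrowth.of_fderiv (k := 1) (C := |a| + |b|)
  · have h : (fderiv ℝ fun x : ℝ => a * x + b) = fun _ : ℝ =>
        (a • (1 : ℝ →L[ℝ] ℝ)) := by
      funext x
      have h1 : HasFDerivAt (fun x : ℝ => a * x + b) (a • (1 : ℝ →L[ℝ] ℝ)) x := by
        exact (((hasFDerivAt_id x).const_mul a).add_const b).congr_fderiv (by ext; simp)
      exact h1.fderiv
    rw [h]
    exact Function.HasTemperateGrowth.const _
  · exact (differentiable_id.const_mul a).add_const b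
  · intro x
    have : ‖a * x + b‖ ≤ |a| * |x| + |b| := by
      rw [Real.norm_eq_abs]
      calc |a * x + b| ≤ |a * x| + |b| := abs_add_le _ _
      _ = |a| * |x| + |b| := by rw [abs_mul]
    refine this.trans ?_
    have hx : |x| = ‖x‖ := rfl
    nlinarith [abs_nonneg a, abs_nonneg b, norm_nonneg x, abs_nonneg x]

lemma upper_of_affine {g : ℝ → ℝ} (a b : ℝ) (ha : a ≠ 0) (hg : ∀ x, g x = a * x + b) :
    ∃ (k : ℕ) (C : ℝ), ∀ x : ℝ, ‖x‖ ≤ C * (1 + ‖g x‖) ^ k := by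
  refine ⟨1, (1 + |b|) / |a|, fun x => ?_⟩
  have ha' : (0:ℝ) < |a| := abs_pos.mpr ha
  rw [hg x, pow_one, div_mul_eq_mul_div, le_div_iff₀ ha', Real.norm_eq_abs, Real.norm_eq_abs]
  have h1 : |a * x| ≤ |a * x + b| + |b| := by
    calc |a * x| = |(a * x + b) - b| := by ring_nf
    _ ≤ |a * x + b| + |b| := abs_sub _ _
  rw [abs_mul] at h1
  nlinarith [abs_nonneg (a * x + b), abs_nonneg b, abs_nonneg x]

/-- The Schwartz function `x ↦ ψ ((x - x₀) / ε)`, for `ε ≠ 0`. -/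
def SchwartzMap.dilShift (x₀ ε : ℝ) (hε : ε ≠ 0) (ψ : 𝓢(ℝ, ℂ)) : 𝓢(ℝ, ℂ) :=
  SchwartzMap.compCLM (𝕜 := ℝ) (g := fun x : ℝ => (x - x₀) / ε)
    (hasTemperateGrowth_of_affine ε⁻¹ (-(x₀ / ε)) (fun x => by field_simp; ring))
    (upper_of_affine ε⁻¹ (-(x₀ / ε)) (inv_ne_zero hε) (fun x => by field_simp; ring)) ψ

/-- The pairing `⟨f(x₀ + ε ·), ψ⟩ = ε⁻¹ ⟨f, ψ((· - x₀)/ε)⟩` (junk value `0` if `ε = 0`). -/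
def pairScale (f : 𝓢(ℝ, ℂ) → ℂ) (x₀ ε : ℝ) (ψ : 𝓢(ℝ, ℂ)) : ℂ :=
  if hε : ε = 0 then 0 else (ε : ℂ)⁻¹ * f (SchwartzMap.dilShift x₀ ε hε ψ)

/-- Complex conjugation of a Schwartz function. -/
def SchwartzMap.conjSM (ψ : 𝓢(ℝ, ℂ)) : 𝓢(ℝ, ℂ) where
  toFun := fun x => conj (ψ x)
  smooth' := Complex.conjLIE.contDiff.comp ψ.smooth'
  decay' := by
    intro k n
    obtain ⟨C, hC⟩ := ψ.decay' k n
    refine ⟨C, fun x => ?_⟩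
    have h : ‖iteratedFDeriv ℝ n (fun y => Complex.conjLIE (ψ y)) x‖
        = ‖iteratedFDeriv ℝ n (fun y => ψ y) x‖ :=
      Complex.conjLIE.norm_iteratedFDeriv_comp_left (fun y => ψ y) x n
    simpa [Complex.conjLIE_apply] using h ▸ hC x

/-- The wavelet family member `φ_{m,n}(x) = 2^(m/2) φ(2^m x - n)` as a Schwartz function. -/
def SchwartzMap.wavelet (φ : 𝓢(ℝ, ℂ)) (m n : ℤ) : 𝓢(ℝ, ℂ) :=
  (2 : ℝ) ^ ((m : ℝ) / 2) •
    SchwartzMap.compCLM (𝕜 := ℝ) (g := fun x : ℝ => (2 : ℝ) ^ m * x - (n : ℝ))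
      (hasTemperateGrowth_of_affine ((2:ℝ) ^ m) (-(n : ℝ)) (fun x => by ring))
      (upper_of_affine ((2:ℝ) ^ m) (-(n : ℝ)) (by positivity) (fun x => by ring)) φ

/-- `φ` is an orthonormal wavelet: the family `φ_{m,n}` is an orthonormal basis of `L²(ℝ)`. -/
def IsOrthonormalWavelet (φ : 𝓢(ℝ, ℂ)) : Prop :=
  (∀ m n m' n' : ℤ, ∫ x : ℝ, φ.wavelet m n x * conj (φ.wavelet m' n' x)
      = if m = m' ∧ n = n' then 1 else 0) ∧
  ∀ h : ℝ → ℂ, MemLp h 2 volume →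
    (∀ m n : ℤ, ∫ x : ℝ, h x * conj (φ.wavelet m n x) = 0) → h =ᵐ[volume] 0

/-- Membership in `S₀(ℝ)`: all moments vanish. -/
def IsS0 (ψ : 𝓢(ℝ, ℂ)) : Prop := ∀ n : ℕ, ∫ x : ℝ, (x : ℂ) ^ n * ψ x = 0

/-- A measurable function positive near `0⁺` slowly varying at the origin. -/
def SlowlyVaryingAtZero (L : ℝ → ℝ) : Prop :=
  Measurable L ∧ (∃ A > (0:ℝ), ∀ x : ℝ, 0 < x → x ≤ A → 0 < L x) ∧
    ∀ a > (0:ℝ), Tendsto (fun ε => L (a * ε) / L ε) (𝓝[>] 0) (𝓝 1)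

/-- A measurable function positive near `∞` slowly varying at infinity. -/
def SlowlyVaryingAtInfty (L : ℝ → ℝ) : Prop :=
  Measurable L ∧ (∃ A > (0:ℝ), ∀ x : ℝ, A ≤ x → 0 < L x) ∧
    ∀ a > (0:ℝ), Tendsto (fun lam => L (a * lam) / L lam) atTop (𝓝 1)

/-- The wavelet coefficient `c_{m,n}^φ(f; ε, x₀) = ⟨f(x₀+ε·), conj(φ_{m,n})⟩`. -/
def waveletCoeff (φ : 𝓢(ℝ, ℂ)) (f : 𝓢(ℝ, ℂ) → ℂ) (ε x₀ : ℝ) (m n : ℤ) : ℂ :=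
  pairScale f x₀ ε (φ.wavelet m n).conjSM



lemma schwartz_zero_of_iteratedDeriv (N : ℕ) (ψ : 𝓢(ℝ, ℂ))
    (h : ∀ x, iteratedDeriv N (⇑ψ) x = 0) : ∀ x, ψ x = 0 := by
  induction N generalizing ψ with
  | zero => simpa using h
  | succ N ih =>
    have hd : ∀ x, deriv (⇑ψ) x = 0 := by
      have h0 : ∀ x, iteratedDeriv N (⇑(SchwartzMap.derivCLM ℝ ℂ ψ)) x = 0 := by
        intro x
        have hfun : ⇑(SchwartzMap.derivCLM ℝ ℂ ψ) = deriv (⇑ψ) := by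
          funext y; simp [SchwartzMap.derivCLM_apply]
        rw [hfun, ← iteratedDeriv_succ']
        exact h x
      intro x
      have := ih (SchwartzMap.derivCLM ℝ ℂ ψ) h0 x
      simpa [SchwartzMap.derivCLM_apply] using this
    have hconst : ∀ x, ψ x = ψ 0 := fun x =>
      is_const_of_deriv_eq_zero (ψ.differentiable) hd x 0
    obtain ⟨C, hC⟩ := ψ.decay' 1 0
    intro x
    rw [hconst x]
    by_contra hne
    have hψ0 : 0 < ‖ψ 0‖ := norm_pos_iff.mpr hne
    have hkey : ∀ y : ℝ, ‖y‖ * ‖ψ 0‖ ≤ C := by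
      intro y
      have h2 := hC y
      rw [norm_iteratedFDeriv_zero] at h2
      calc ‖y‖ * ‖ψ 0‖ = ‖y‖ ^ 1 * ‖ψ.toFun y‖ := by
            rw [pow_one, show ψ.toFun y = ψ y from rfl, hconst y]
      _ ≤ C := h2
    have hC0 : (0:ℝ) ≤ C := le_trans (by simp) (hkey 0)
    have hy := hkey ((C + 1) / ‖ψ 0‖)
    rw [Real.norm_eq_abs, abs_of_nonneg (by positivity), div_mul_cancel₀ _ (ne_of_gt hψ0)] at hy
    linarith


lemma taylor_global_bound : ∀ (N : ℕ) (f : ℝ → ℂ), ContDiff ℝ ∞ f → ∀ {C : ℝ},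
    (∀ x, ‖iteratedDeriv (N + 1) f x‖ ≤ C) → ∀ (t h : ℝ),
    ‖f (t + h) - ∑ k ∈ Finset.range (N + 1),
        ((h ^ k / k.factorial : ℝ)) • iteratedDeriv k f t‖ ≤ C * |h| ^ (N + 1) := by
  intro N
  induction N with
  | zero =>
    intro f hf C hC t h
    have hb : ∀ x, ‖deriv f x‖ ≤ C := by
      intro x; have := hC x; rwa [iteratedDeriv_one] at this
    have hdiff : ∀ x ∈ (Set.univ : Set ℝ), DifferentiableAt ℝ f x :=
      fun x _ => (hf.differentiable (by simp)).differentiableAt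
    have := convex_univ.norm_image_sub_le_of_norm_deriv_le hdiff
      (fun x _ => hb x) (Set.mem_univ t) (Set.mem_univ (t + h))
    simpa [iteratedDeriv_zero, Real.norm_eq_abs] using this
  | succ N ih =>
    intro f hf C hC t h
    set D : ℕ → ℂ := fun k => iteratedDeriv k f t with hD
    set g : ℝ → ℂ := fun y =>
      f (t + y) - ∑ k ∈ Finset.range (N + 2), ((y ^ k / k.factorial : ℝ)) • D k with hg
    have hC0 : (0:ℝ) ≤ C := (norm_nonneg _).trans (hC 0)
    -- derivative of g
    have hgderiv : ∀ y : ℝ, HasDerivAt g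
        (deriv f (t + y) - ∑ j ∈ Finset.range (N + 1),
          ((y ^ j / j.factorial : ℝ)) • iteratedDeriv j (deriv f) t) y := by
      intro y
      have h1 : HasDerivAt (fun y : ℝ => f (t + y)) (deriv f (t + y)) y := by
        have hfd : HasDerivAt f (deriv f (t + y)) (t + y) :=
          ((hf.differentiable (by simp)) (t + y)).hasDerivAt
        simpa [Function.comp_def] using HasDerivAt.scomp y hfd ((hasDerivAt_id y).const_add t)
      have h2 : HasDerivAt (fun y : ℝ => ∑ k ∈ Finset.range (N + 2),
          ((y ^ k / k.factorial : ℝ)) • D k)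
          (∑ k ∈ Finset.range (N + 2), (((k : ℝ) * y ^ (k - 1) / k.factorial : ℝ)) • D k) y := by
        apply HasDerivAt.fun_sum
        intro k _
        exact ((hasDerivAt_pow k y).div_const (k.factorial : ℝ)).smul_const (D k)
      have h3 : (∑ k ∈ Finset.range (N + 2), (((k : ℝ) * y ^ (k - 1) / k.factorial : ℝ)) • D k)
          = ∑ j ∈ Finset.range (N + 1),
            ((y ^ j / j.factorial : ℝ)) • iteratedDeriv j (deriv f) t := by
        rw [Finset.sum_range_succ']
        simp only [Nat.cast_zero, zero_mul, zero_div, zero_smul, add_zero]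
        apply Finset.sum_congr rfl
        intro j _
        have hfac : ((j + 1 : ℕ) : ℝ) * y ^ ((j + 1) - 1) / ((j + 1).factorial : ℝ)
            = y ^ j / (j.factorial : ℝ) := by
          rw [Nat.factorial_succ]
          push_cast
          have hj : (0:ℝ) < (j.factorial : ℝ) := by positivity
          field_simp
        rw [hfac]
        simp [hD, ← iteratedDeriv_succ']
      rw [← h3]
      exact h1.sub h2
    have hg0 : g 0 = 0 := by
      simp only [hg, add_zero]
      rw [Finset.sum_eq_single 0]
      · simp [hD, iteratedDeriv_zero]
      · intro k _ hk
        simp [zero_pow hk]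
      · simp
    -- bound on deriv g on uIcc 0 h
    have hf' : ContDiff ℝ ∞ (deriv f) := (contDiff_infty_iff_deriv.mp hf).2
    have hC' : ∀ x, ‖iteratedDeriv (N + 1) (deriv f) x‖ ≤ C := by
      intro x
      rw [← iteratedDeriv_succ']
      exact hC x
    have hbound : ∀ y ∈ Set.uIcc 0 h, ‖deriv g y‖ ≤ C * |h| ^ (N + 1) := by
      intro y hy
      rw [(hgderiv y).deriv]
      have := ih (deriv f) hf' hC' t y
      refine this.trans ?_
      have hyh : |y| ≤ |h| := by
        rcases Set.mem_uIcc.mp hy with ⟨h1, h2⟩ | ⟨h1, h2⟩ <;> rw [abs_le] <;>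
          constructor <;> cases abs_cases h <;> linarith
      exact mul_le_mul_of_nonneg_left (pow_le_pow_left₀ (abs_nonneg y) hyh _) hC0
    have hmv := convex_uIcc (0:ℝ) h |>.norm_image_sub_le_of_norm_deriv_le
      (fun y hy => (hgderiv y).differentiableAt)
      hbound (Set.left_mem_uIcc) (Set.right_mem_uIcc)
    rw [hg0, sub_zero] at hmv
    have : ‖g h‖ ≤ C * |h| ^ (N + 1) * |h| := by
      simpa [Real.norm_eq_abs] using hmv
    calc ‖g h‖ ≤ C * |h| ^ (N + 1) * |h| := this
    _ = C * |h| ^ (N + 2) := by ring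


lemma key_estimate (φ : 𝓢(ℝ, ℂ)) (N : ℕ) {C₁ : ℝ}
    (taylor : ∀ (t h : ℝ),
      ‖φ (t + h) - ∑ k ∈ Finset.range (N + 1),
        ((h ^ k / k.factorial : ℝ)) • iteratedDeriv k (⇑φ) t‖ ≤ C₁ * |h| ^ (N + 1))
    (hmom : ∀ k < N, (∫ y : ℝ, (y : ℂ) ^ k * conj (φ y)) = 0)
    {s : ℝ} (hs : 0 < s) (t : ℝ)
    (hI : (∫ y : ℝ, φ (t + s * y) * conj (φ y)) = 0) :
    (s ^ N / N.factorial) * ‖iteratedDeriv N (⇑φ) t * ∫ y : ℝ, (y : ℂ) ^ N * conj (φ y)‖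
      ≤ C₁ * s ^ (N + 1) * ∫ y : ℝ, ‖y‖ ^ (N + 1) * ‖φ y‖ := by
  have hC₁0 : (0:ℝ) ≤ C₁ := by
    have h0 := taylor 0 1
    have h2 := le_trans (norm_nonneg _) h0
    simpa using h2
  -- integrability facts
  have hconj_meas : AEStronglyMeasurable (fun y : ℝ => conj (φ y)) volume :=
    (continuous_star.comp φ.continuous).aestronglyMeasurable
  have hpow_int : ∀ k : ℕ, Integrable (fun y : ℝ => (y : ℂ) ^ k * conj (φ y)) volume := by
    intro k
    refine (φ.integrable_pow_mul volume k).mono ?_ (Eventually.of_forall fun y => ?_)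
    · exact ((Complex.continuous_ofReal.pow k).mul
        (continuous_star.comp φ.continuous)).aestronglyMeasurable
    · have h1 : ‖(y:ℂ)^k * conj (φ y)‖ = |y|^k * ‖φ y‖ := by
        simp [norm_mul, norm_pow, RCLike.norm_conj]
      exact h1.le.trans (le_abs_self _)
  have hTf_eq : ∀ y : ℝ, (∑ k ∈ Finset.range (N + 1),
        ((s * y) ^ k / k.factorial : ℝ) • iteratedDeriv k (⇑φ) t) * conj (φ y)
      = ∑ k ∈ Finset.range (N + 1),
        ((s ^ k / k.factorial : ℝ)) • (iteratedDeriv k (⇑φ) t * ((y : ℂ) ^ k * conj (φ y))) := by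
    intro y
    rw [Finset.sum_mul]
    refine Finset.sum_congr rfl fun k _ => ?_
    simp only [Complex.real_smul]
    push_cast
    ring
  have hterm_int : ∀ k : ℕ, Integrable (fun y : ℝ =>
      ((s ^ k / k.factorial : ℝ)) • (iteratedDeriv k (⇑φ) t * ((y : ℂ) ^ k * conj (φ y)))) volume :=
    fun k => (((hpow_int k).const_mul (iteratedDeriv k (⇑φ) t)).smul (s ^ k / k.factorial : ℝ) :)
  have hT_int : Integrable (fun y : ℝ => (∑ k ∈ Finset.range (N + 1),
      ((s * y) ^ k / k.factorial : ℝ) • iteratedDeriv k (⇑φ) t) * conj (φ y)) volume := by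
    have := integrable_finset_sum (Finset.range (N + 1)) (fun k _ => hterm_int k)
    refine this.congr (Eventually.of_forall fun y => ?_)
    simpa using (hTf_eq y).symm
  have hbddφ : ∃ Cb : ℝ, ∀ x : ℝ, ‖φ x‖ ≤ Cb := by
    obtain ⟨Cb, hCb⟩ := φ.decay' 0 0
    exact ⟨Cb, fun x => by have := hCb x; simp [norm_iteratedFDeriv_zero] at this; exact this⟩
  have hF_int : Integrable (fun y : ℝ => φ (t + s * y) * conj (φ y)) volume := by
    have hconj_int : Integrable (fun y : ℝ => conj (φ y)) volume := by
      refine φ.integrable.mono hconj_meas (Eventually.of_forall fun y => ?_)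
      rw [RCLike.norm_conj]
    refine hconj_int.bdd_mul (c := hbddφ.choose) ?_ ?_
    · exact (φ.continuous.comp (continuous_const.add
        (continuous_const.mul continuous_id))).aestronglyMeasurable
    · exact Eventually.of_forall fun y => hbddφ.choose_spec _
  have hR_int : Integrable (fun y : ℝ => (φ (t + s * y) - ∑ k ∈ Finset.range (N + 1),
      ((s * y) ^ k / k.factorial : ℝ) • iteratedDeriv k (⇑φ) t) * conj (φ y)) volume := by
    refine (hF_int.sub hT_int).congr (Eventually.of_forall fun y => ?_)
    simp only [Pi.sub_apply]
    exact (sub_mul _ _ _).symm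
  -- split the integral
  have hsplit : (0:ℂ) = (∫ y : ℝ, (∑ k ∈ Finset.range (N + 1),
        ((s * y) ^ k / k.factorial : ℝ) • iteratedDeriv k (⇑φ) t) * conj (φ y))
      + ∫ y : ℝ, (φ (t + s * y) - ∑ k ∈ Finset.range (N + 1),
        ((s * y) ^ k / k.factorial : ℝ) • iteratedDeriv k (⇑φ) t) * conj (φ y) := by
    rw [← integral_add hT_int hR_int, ← hI]
    refine integral_congr_ae (Eventually.of_forall fun y => ?_)
    ring
  -- compute the Taylor part
  have hTval : (∫ y : ℝ, (∑ k ∈ Finset.range (N + 1),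
        ((s * y) ^ k / k.factorial : ℝ) • iteratedDeriv k (⇑φ) t) * conj (φ y))
      = ((s ^ N / N.factorial : ℝ)) •
        (iteratedDeriv N (⇑φ) t * ∫ y : ℝ, (y : ℂ) ^ N * conj (φ y)) := by
    rw [integral_congr_ae (Eventually.of_forall hTf_eq),
      integral_finset_sum _ (fun k _ => hterm_int k)]
    rw [Finset.sum_eq_single_of_mem N (Finset.self_mem_range_succ N)]
    · rw [integral_smul, integral_const_mul]
    · intro k hk hkN
      have hkN' : k < N := lt_of_le_of_ne (Nat.lt_succ_iff.mp (Finset.mem_range.mp hk)) hkN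
      rw [integral_smul, integral_const_mul, hmom k hkN', mul_zero, smul_zero]
  -- bound the remainder part
  have hB_int : Integrable (fun y : ℝ => C₁ * s ^ (N+1) * (‖y‖ ^ (N + 1) * ‖φ y‖)) volume :=
    (φ.integrable_pow_mul volume (N+1)).const_mul _
  have hRbound : ‖∫ y : ℝ, (φ (t + s * y) - ∑ k ∈ Finset.range (N + 1),
        ((s * y) ^ k / k.factorial : ℝ) • iteratedDeriv k (⇑φ) t) * conj (φ y)‖
      ≤ C₁ * s ^ (N + 1) * ∫ y : ℝ, ‖y‖ ^ (N + 1) * ‖φ y‖ := by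
    rw [← integral_const_mul]
    refine norm_integral_le_of_norm_le hB_int (Eventually.of_forall fun y => ?_)
    rw [norm_mul, RCLike.norm_conj]
    have h1 := taylor t (s * y)
    have h2 : |s * y| ^ (N + 1) = s ^ (N + 1) * |y| ^ (N + 1) := by
      rw [abs_mul, mul_pow, abs_of_pos hs]
    calc ‖φ (t + s * y) - ∑ k ∈ Finset.range (N + 1),
          ((s * y) ^ k / k.factorial : ℝ) • iteratedDeriv k (⇑φ) t‖ * ‖φ y‖
        ≤ C₁ * |s * y| ^ (N + 1) * ‖φ y‖ := mul_le_mul_of_nonneg_right h1 (norm_nonneg _)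
      _ = C₁ * s ^ (N + 1) * (‖y‖ ^ (N + 1) * ‖φ y‖) := by
          rw [h2, Real.norm_eq_abs]; ring
  -- conclude
  have heq : ((s ^ N / N.factorial : ℝ)) •
        (iteratedDeriv N (⇑φ) t * ∫ y : ℝ, (y : ℂ) ^ N * conj (φ y))
      = - ∫ y : ℝ, (φ (t + s * y) - ∑ k ∈ Finset.range (N + 1),
        ((s * y) ^ k / k.factorial : ℝ) • iteratedDeriv k (⇑φ) t) * conj (φ y) := by
    rw [← hTval]
    linear_combination -hsplit
  have hnorm : (s ^ N / (N.factorial : ℝ)) *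
        ‖iteratedDeriv N (⇑φ) t * ∫ y : ℝ, (y : ℂ) ^ N * conj (φ y)‖
      = ‖∫ y : ℝ, (φ (t + s * y) - ∑ k ∈ Finset.range (N + 1),
        ((s * y) ^ k / k.factorial : ℝ) • iteratedDeriv k (⇑φ) t) * conj (φ y)‖ := by
    rw [← norm_neg (∫ y : ℝ, _), ← heq, norm_smul, Real.norm_eq_abs,
      abs_of_nonneg (by positivity)]
  rw [hnorm]
  exact hRbound

/-- If `φ` is a Schwartz function such that the family
`φ_{m,n}(x) = 2^{m/2} φ(2^m x − n)`, `m,n ∈ ℤ`, is an orthonormal basis of `L²(ℝ)`,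
then all moments of `φ` vanish: `∫ xⁿ φ(x) dx = 0` for every `n ∈ ℕ`. -/

theorem moments_vanish_of_orthonormal_wavelet
    (φ : 𝓢(ℝ, ℂ)) (hφwav : IsOrthonormalWavelet φ) :
    ∀ n : ℕ, ∫ x : ℝ, (x : ℂ) ^ n * φ x = 0 := by
  -- evaluation of the wavelet family
  have heval : ∀ (m n : ℤ) (x : ℝ), φ.wavelet m n x
      = ((2:ℝ) ^ ((m:ℝ)/2)) • φ ((2:ℝ) ^ m * x - n) := by
    intro m n x
    simp [SchwartzMap.wavelet, SchwartzMap.smul_apply]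
  have h00 : ∀ x : ℝ, φ.wavelet 0 0 x = φ x := by
    intro x
    rw [heval]
    norm_num
  -- φ is not identically zero
  have hφnorm : (∫ x : ℝ, φ x * conj (φ x)) = 1 := by
    have h1 := hφwav.1 0 0 0 0
    rw [if_pos ⟨rfl, rfl⟩] at h1
    rw [← h1]
    refine integral_congr_ae (Eventually.of_forall fun x => ?_)
    simp only [h00]
  have hφne : ∃ x : ℝ, φ x ≠ 0 := by
    by_contra hcon
    push_neg at hcon
    have : (∫ x : ℝ, φ x * conj (φ x)) = 0 := by
      simp [hcon]
    rw [hφnorm] at this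
    exact one_ne_zero this
  -- orthogonality to fine-scale translates
  have horth : ∀ (m : ℕ), 1 ≤ m → ∀ (n : ℤ),
      (∫ x : ℝ, φ x * conj (φ ((2:ℝ) ^ (m:ℤ) * x - n))) = 0 := by
    intro m hm n
    have h1 := hφwav.1 0 0 (m:ℤ) n
    rw [if_neg (by rintro ⟨hm0, -⟩; omega)] at h1
    have h2 : ∀ x : ℝ, φ.wavelet 0 0 x * conj (φ.wavelet (m:ℤ) n x)
        = (((2:ℝ) ^ (((m:ℤ):ℝ)/2) : ℝ) : ℂ) *
          (φ x * conj (φ ((2:ℝ) ^ (m:ℤ) * x - n))) := by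
      intro x
      rw [h00, heval]
      rw [Complex.real_smul, map_mul, Complex.conj_ofReal]
      ring
    rw [integral_congr_ae (Eventually.of_forall h2), integral_const_mul] at h1
    rcases mul_eq_zero.mp h1 with h | h
    · exfalso
      have : ((2:ℝ) ^ (((m:ℤ):ℝ)/2) : ℝ) ≠ 0 := (Real.rpow_pos_of_pos two_pos _).ne'
      exact this (by exact_mod_cast h)
    · exact h
  -- change of variables
  have hcov : ∀ (m : ℕ), 1 ≤ m → ∀ (n : ℤ),
      (∫ y : ℝ, φ (((2:ℝ) ^ (m:ℤ))⁻¹ * (n:ℝ) + ((2:ℝ) ^ (m:ℤ))⁻¹ * y) * conj (φ y)) = 0 := by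
    intro m hm n
    have ha0 : ((2:ℝ) ^ (m:ℤ)) ≠ 0 := by positivity
    set a : ℝ := (2:ℝ) ^ (m:ℤ) with ha
    have key : ∀ x : ℝ, φ x * conj (φ (a * x - n))
        = (fun y : ℝ => φ (a⁻¹ * (n:ℝ) + a⁻¹ * y) * conj (φ y)) ((fun y => y - (n:ℝ)) (a * x)) := by
      intro x
      simp only []
      have hx : a⁻¹ * (n:ℝ) + a⁻¹ * (a * x - n) = x := by
        field_simp
        ring
      rw [hx]
    have h3 := horth m hm n
    rw [integral_congr_ae (Eventually.of_forall key)] at h3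
    rw [Measure.integral_comp_mul_left
      (fun z : ℝ => (fun y : ℝ => φ (a⁻¹ * (n:ℝ) + a⁻¹ * y) * conj (φ y)) ((fun y => y - (n:ℝ)) z)) a] at h3
    simp only [] at h3
    rw [integral_sub_right_eq_self (fun y : ℝ => φ (a⁻¹ * (n:ℝ) + a⁻¹ * y) * conj (φ y)) (n:ℝ)] at h3
    rcases smul_eq_zero.mp h3 with h | h
    · exact absurd h (by simpa using (inv_ne_zero ha0))
    · exact h
  -- global bound on the (N+1)-st derivative
  intro n
  induction n using Nat.strong_induction_on with
  | _ N IH =>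
  by_contra hMN
  have hconjmom : ∀ k : ℕ, (∫ y : ℝ, (y:ℂ) ^ k * conj (φ y))
      = conj (∫ x : ℝ, (x:ℂ) ^ k * φ x) := by
    intro k
    rw [← integral_conj]
    refine integral_congr_ae (Eventually.of_forall fun y => ?_)
    simp only [map_mul, map_pow, Complex.conj_ofReal]
  have hmom : ∀ k, k < N → (∫ y : ℝ, (y:ℂ) ^ k * conj (φ y)) = 0 := by
    intro k hk
    rw [hconjmom k, IH k hk, map_zero]
  have hcne : (∫ y : ℝ, (y:ℂ) ^ N * conj (φ y)) ≠ 0 := by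
    rw [hconjmom]
    intro h
    exact hMN (by simpa using congrArg conj h)
  obtain ⟨C₁, hC₁⟩ : ∃ C₁ : ℝ, ∀ x : ℝ, ‖iteratedDeriv (N+1) (⇑φ) x‖ ≤ C₁ := by
    obtain ⟨C, hC⟩ := φ.decay' 0 (N+1)
    refine ⟨C, fun x => ?_⟩
    have := hC x
    rwa [pow_zero, one_mul, norm_iteratedFDeriv_eq_norm_iteratedDeriv] at this
  have htaylor := taylor_global_bound N (⇑φ) (φ.smooth') hC₁
  set B : ℝ := ∫ y : ℝ, ‖y‖ ^ (N + 1) * ‖φ y‖ with hB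
  set K : ℝ := (N.factorial : ℝ) * (C₁ * B) with hK
  set c : ℂ := ∫ y : ℝ, (y:ℂ) ^ N * conj (φ y) with hc
  -- iterated derivative of order N vanishes identically
  have hDzero : ∀ x₀ : ℝ, iteratedDeriv N (⇑φ) x₀ = 0 := by
    intro x₀
    set s : ℕ → ℝ := fun m => ((2:ℝ) ^ (m:ℤ))⁻¹ with hs
    set t : ℕ → ℝ := fun m => s m * (⌊(2:ℝ) ^ (m:ℤ) * x₀⌋ : ℤ) with ht
    have hspos : ∀ m, 0 < s m := fun m => by positivity
    have hest : ∀ m : ℕ, 1 ≤ m → ‖iteratedDeriv N (⇑φ) (t m) * c‖ ≤ K * s m := by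
      intro m hm
      have hIm : (∫ y : ℝ, φ (t m + s m * y) * conj (φ y)) = 0 := by
        have h4 := hcov m hm ⌊(2:ℝ) ^ (m:ℤ) * x₀⌋
        refine Eq.trans ?_ h4
        refine integral_congr_ae (Eventually.of_forall fun y => ?_)
        rw [ht, hs]
      have h1 := key_estimate φ N htaylor hmom (hspos m) (t m) hIm
      rw [← hc] at h1
      have hsN : 0 < (s m) ^ N := pow_pos (hspos m) N
      have h2 : (s m) ^ N * ‖iteratedDeriv N (⇑φ) (t m) * c‖ ≤ (s m) ^ N * (K * s m) := by
        have hfac : (0:ℝ) < (N.factorial : ℝ) := by positivity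
        calc (s m) ^ N * ‖iteratedDeriv N (⇑φ) (t m) * c‖
            = ((s m) ^ N / (N.factorial : ℝ) * ‖iteratedDeriv N (⇑φ) (t m) * c‖) *
              (N.factorial : ℝ) := by field_simp
          _ ≤ (C₁ * (s m) ^ (N + 1) * B) * (N.factorial : ℝ) :=
              mul_le_mul_of_nonneg_right h1 hfac.le
          _ = (s m) ^ N * (K * s m) := by rw [hK, pow_succ]; ring
      exact le_of_mul_le_mul_left h2 hsN
    have hslim : Tendsto s atTop (𝓝 0) := by
      have hseq : s = fun m : ℕ => ((2:ℝ)⁻¹) ^ m := by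
        funext m
        rw [hs]
        simp [zpow_natCast, inv_pow]
      rw [hseq]
      exact tendsto_pow_atTop_nhds_zero_of_lt_one (by norm_num) (by norm_num)
    have hlim1 : Tendsto (fun m => K * s m) atTop (𝓝 0) := by
      simpa using hslim.const_mul K
    have htlim : Tendsto t atTop (𝓝 x₀) := by
      rw [tendsto_iff_dist_tendsto_zero]
      have hb : ∀ m : ℕ, dist (t m) x₀ ≤ s m := by
        intro m
        rw [Real.dist_eq, ht]
        have hx0 : x₀ = s m * ((2:ℝ) ^ (m:ℤ) * x₀) := by
          rw [hs]
          field_simp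
        set A : ℝ := (2:ℝ) ^ (m:ℤ) * x₀ with hA
        have h5 : |s m * (⌊A⌋ : ℤ) - x₀| = s m * |(⌊A⌋ : ℝ) - A| := by
          conv_lhs => rw [hx0]
          rw [← mul_sub, abs_mul, abs_of_pos (hspos m)]
        rw [h5]
        have h6 : |(⌊A⌋ : ℝ) - A| ≤ 1 := by
          have h7 := Int.floor_le A
          have h8 := Int.sub_one_lt_floor A
          rw [abs_le]
          constructor <;> [linarith; linarith]
        calc s m * |(⌊A⌋ : ℝ) - A| ≤ s m * 1 :=
              mul_le_mul_of_nonneg_left h6 (hspos m).le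
          _ = s m := mul_one _
      exact tendsto_of_tendsto_of_tendsto_of_le_of_le tendsto_const_nhds hslim
        (fun m => dist_nonneg) hb
    have hcont : Continuous (iteratedDeriv N (⇑φ)) :=
      (φ.smooth').continuous_iteratedDeriv N (mod_cast le_top)
    have hlim2 : Tendsto (fun m : ℕ => ‖iteratedDeriv N (⇑φ) (t m) * c‖) atTop
        (𝓝 ‖iteratedDeriv N (⇑φ) x₀ * c‖) := by
      have := (((hcont.tendsto x₀).comp htlim).mul_const c).norm
      simpa [Function.comp] using this
    have hle : ‖iteratedDeriv N (⇑φ) x₀ * c‖ ≤ 0 :=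
      le_of_tendsto_of_tendsto hlim2 hlim1 (eventually_atTop.mpr ⟨1, hest⟩)
    rcases mul_eq_zero.mp (norm_le_zero_iff.mp hle) with h | h
    · exact h
    · exact absurd h hcne
  obtain ⟨x, hx⟩ := hφne
  exact hx (schwartz_zero_of_iteratedDeriv N φ hDzero x)

end
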